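/- There exists a finite strategic game H for which the inclusion MLW^ω ⊆ LW^ω fails. Concretely, let H be the two-player game with row player strategies {A, B, C, D}, column player strategies {X, Y, Z}, and payoffs (row, column): (A,X) = (2,1), (A,Y) = (0,1), (A,Z) = (1,0), (B,X) = (0,1), (B,Y) = (2,1), (B,Z) = (1,0), (C,X) = (1,1), (C,Y) = (1,0), (C,Z) = (0,0), (D,X) = (1,0), (D,Y) = (0,1), (D,Z) = (0,0). Then MLW^ω(H) = ({A, B}, {X, Y}) while LW^ω(H) = ({A}, {X}), so MLW^ω ⊄ LW^ω. -/

import Mathlib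

open Function

/-- The opponents' part of the joint strategy `t` lies in the restriction `G`. -/
def OppIn {ι : Type*} [DecidableEq ι] {σ : ι → Type*} (G : ∀ i, Set (σ i)) (i : ι) (t : ∀ j, σ j) : Prop :=
  ∀ j, j ≠ i → t j ∈ G j

/-- `s'` strictly dominates `s` on the restriction `G` (pure strategies). -/
def SDom {ι : Type*} [DecidableEq ι] {σ : ι → Type*} (p : ι → (∀ j, σ j) → ℝ) (G : ∀ i, Set (σ i))
    (i : ι) (s' s : σ i) : Prop :=
  ∀ t : ∀ j, σ j, OppIn G i t → p i (update t i s) < p i (update t i s')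

/-- `s'` weakly dominates `s` on the restriction `G` (pure strategies). -/
def WDom {ι : Type*} [DecidableEq ι] {σ : ι → Type*} (p : ι → (∀ j, σ j) → ℝ) (G : ∀ i, Set (σ i))
    (i : ι) (s' s : σ i) : Prop :=
  (∀ t : ∀ j, σ j, OppIn G i t → p i (update t i s) ≤ p i (update t i s')) ∧
  (∃ t : ∀ j, σ j, OppIn G i t ∧ p i (update t i s) < p i (update t i s'))

/-- Probability distributions over a finite type with support contained in `A`. -/
def Mixed {α : Type*} [Fintype α] (A : Set α) : Set (α → ℝ) :=
  {m | (∀ a, 0 ≤ m a) ∧ ∑ a, m a = 1 ∧ ∀ a, m a ≠ 0 → a ∈ A}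

/-- Expected payoff of player `i` using mixed strategy `m` against `t₋ᵢ`. -/
def epay {ι : Type*} [DecidableEq ι] {σ : ι → Type*} [∀ i, Fintype (σ i)]
    (p : ι → (∀ j, σ j) → ℝ) (i : ι) (m : σ i → ℝ) (t : ∀ j, σ j) : ℝ :=
  ∑ a, m a * p i (update t i a)

/-- The mixed strategy `m` strictly dominates `s` on `G`. -/
def MSDom {ι : Type*} [DecidableEq ι] {σ : ι → Type*} [∀ i, Fintype (σ i)]
    (p : ι → (∀ j, σ j) → ℝ) (G : ∀ i, Set (σ i)) (i : ι) (m : σ i → ℝ) (s : σ i) : Prop :=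
  ∀ t : ∀ j, σ j, OppIn G i t → p i (update t i s) < epay p i m t

/-- The mixed strategy `m` weakly dominates `s` on `G`. -/
def MWDom {ι : Type*} [DecidableEq ι] {σ : ι → Type*} [∀ i, Fintype (σ i)]
    (p : ι → (∀ j, σ j) → ℝ) (G : ∀ i, Set (σ i)) (i : ι) (m : σ i → ℝ) (s : σ i) : Prop :=
  (∀ t : ∀ j, σ j, OppIn G i t → p i (update t i s) ≤ epay p i m t) ∧
  (∃ t : ∀ j, σ j, OppIn G i t ∧ p i (update t i s) < epay p i m t)

/-- Local elimination of strategies strictly dominated by a pure strategy. -/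
def LS {ι : Type*} [DecidableEq ι] {σ : ι → Type*} (p : ι → (∀ j, σ j) → ℝ)
    (G : ∀ i, Set (σ i)) : ∀ i, Set (σ i) :=
  fun i => {s | s ∈ G i ∧ ¬ ∃ s' ∈ G i, SDom p G i s' s}

/-- Global elimination of strategies strictly dominated by a pure strategy. -/
def GS {ι : Type*} [DecidableEq ι] {σ : ι → Type*} (p : ι → (∀ j, σ j) → ℝ)
    (G : ∀ i, Set (σ i)) : ∀ i, Set (σ i) :=
  fun i => {s | s ∈ G i ∧ ¬ ∃ s' : σ i, SDom p G i s' s}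

/-- Local elimination of strategies weakly dominated by a pure strategy. -/
def LW {ι : Type*} [DecidableEq ι] {σ : ι → Type*} (p : ι → (∀ j, σ j) → ℝ)
    (G : ∀ i, Set (σ i)) : ∀ i, Set (σ i) :=
  fun i => {s | s ∈ G i ∧ ¬ ∃ s' ∈ G i, WDom p G i s' s}

/-- Global elimination of strategies weakly dominated by a pure strategy. -/
def GW {ι : Type*} [DecidableEq ι] {σ : ι → Type*} (p : ι → (∀ j, σ j) → ℝ)
    (G : ∀ i, Set (σ i)) : ∀ i, Set (σ i) :=
  fun i => {s | s ∈ G i ∧ ¬ ∃ s' : σ i, WDom p G i s' s}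

/-- Local elimination of strategies strictly dominated by a mixed strategy. -/
def MLS {ι : Type*} [DecidableEq ι] {σ : ι → Type*} [∀ i, Fintype (σ i)] (p : ι → (∀ j, σ j) → ℝ)
    (G : ∀ i, Set (σ i)) : ∀ i, Set (σ i) :=
  fun i => {s | s ∈ G i ∧ ¬ ∃ m ∈ Mixed (G i), MSDom p G i m s}

/-- Global elimination of strategies strictly dominated by a mixed strategy. -/
def MGS {ι : Type*} [DecidableEq ι] {σ : ι → Type*} [∀ i, Fintype (σ i)] (p : ι → (∀ j, σ j) → ℝ)
    (G : ∀ i, Set (σ i)) : ∀ i, Set (σ i) :=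
  fun i => {s | s ∈ G i ∧ ¬ ∃ m ∈ Mixed (Set.univ : Set (σ i)), MSDom p G i m s}

/-- Local elimination of strategies weakly dominated by a mixed strategy. -/
def MLW {ι : Type*} [DecidableEq ι] {σ : ι → Type*} [∀ i, Fintype (σ i)] (p : ι → (∀ j, σ j) → ℝ)
    (G : ∀ i, Set (σ i)) : ∀ i, Set (σ i) :=
  fun i => {s | s ∈ G i ∧ ¬ ∃ m ∈ Mixed (G i), MWDom p G i m s}

/-- Global elimination of strategies weakly dominated by a mixed strategy. -/
def MGW {ι : Type*} [DecidableEq ι] {σ : ι → Type*} [∀ i, Fintype (σ i)] (p : ι → (∀ j, σ j) → ℝ)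
    (G : ∀ i, Set (σ i)) : ∀ i, Set (σ i) :=
  fun i => {s | s ∈ G i ∧ ¬ ∃ m ∈ Mixed (Set.univ : Set (σ i)), MWDom p G i m s}

/-! The concrete game from Example 1: players are `Bool` (`true` = row player,
`false` = column player), row strategies `Fin 4` (`0 = A, 1 = B, 2 = C, 3 = D`),
column strategies `Fin 3` (`0 = X, 1 = Y, 2 = Z`). -/

/-- Strategy sets of the two players. -/
def Str16 : Bool → Type := fun b => cond b (Fin 4) (Fin 3)

instance (b : Bool) : Fintype (Str16 b) := by
  cases b
  · exact inferInstanceAs (Fintype (Fin 3))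
  · exact inferInstanceAs (Fintype (Fin 4))

instance (b : Bool) : Nonempty (Str16 b) := by
  cases b
  · exact inferInstanceAs (Nonempty (Fin 3))
  · exact inferInstanceAs (Nonempty (Fin 4))

/-- Row player's payoff matrix. -/
def rowPay16 : Fin 4 → Fin 3 → ℝ :=
  ![![2, 0, 1], ![0, 2, 1], ![1, 1, 0], ![1, 0, 0]]

/-- Column player's payoff matrix. -/
def colPay16 : Fin 4 → Fin 3 → ℝ :=
  ![![1, 1, 0], ![1, 1, 0], ![1, 0, 0], ![0, 1, 0]]

/-- The payoff functions of the game. -/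
def pay16 : Bool → (∀ j, Str16 j) → ℝ
  | true => fun t => rowPay16 (t true) (t false)
  | false => fun t => colPay16 (t true) (t false)

/-- The restriction ({A,B}, {X,Y}). -/
def GM16 : ∀ b, Set (Str16 b)
  | true => ({0, 1} : Set (Fin 4))
  | false => ({0, 1} : Set (Fin 3))

/-- The restriction ({A}, {X}). -/
def GL16 : ∀ b, Set (Str16 b)
  | true => ({0} : Set (Fin 4))
  | false => ({0} : Set (Fin 3))


lemma upd_row (t : ∀ j, Str16 j) (a : Str16 true) :
    pay16 true (update t true a) = rowPay16 a (t false) := by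
  have h1 : update t true a true = a := update_self _ _ _
  have h2 : update t true a false = t false := update_of_ne (by simp) _ _
  simp [pay16, h1, h2]

lemma upd_col (t : ∀ j, Str16 j) (x : Str16 false) :
    pay16 false (update t false x) = colPay16 (t true) x := by
  have h1 : update t false x false = x := update_self _ _ _
  have h2 : update t false x true = t true := update_of_ne (by simp) _ _
  simp [pay16, h1, h2]

lemma oppIn_true_iff (G : ∀ b, Set (Str16 b)) (t : ∀ j, Str16 j) :
    OppIn G true t ↔ t false ∈ G false :=
  ⟨fun h => h false (by simp), fun h j hj => by
    cases j with
    | false => exact h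
    | true => exact absurd rfl hj⟩

lemma oppIn_false_iff (G : ∀ b, Set (Str16 b)) (t : ∀ j, Str16 j) :
    OppIn G false t ↔ t true ∈ G true :=
  ⟨fun h => h true (by simp), fun h j hj => by
    cases j with
    | true => exact h
    | false => exact absurd rfl hj⟩

def jt (a : Fin 4) (x : Fin 3) : ∀ j, Str16 j
  | true => a
  | false => x

@[simp] lemma jt_true (a : Fin 4) (x : Fin 3) : jt a x true = a := rfl
@[simp] lemma jt_false (a : Fin 4) (x : Fin 3) : jt a x false = x := rfl

lemma epay_row (m : Str16 true → ℝ) (t : ∀ j, Str16 j) :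
    epay pay16 true m t = ∑ a : Fin 4, m a * rowPay16 a (t false) := by
  unfold epay
  exact Finset.sum_congr rfl fun a _ => by rw [upd_row]

lemma epay_col (m : Str16 false → ℝ) (t : ∀ j, Str16 j) :
    epay pay16 false m t = ∑ x : Fin 3, m x * colPay16 (t true) x := by
  unfold epay
  exact Finset.sum_congr rfl fun x _ => by rw [upd_col]

-- evaluation tests
example : rowPay16 2 1 = 1 := by rfl
example : colPay16 3 1 = 1 := by rfl

lemma MWDom_row_iff (G : ∀ b, Set (Str16 b)) (m : Fin 4 → ℝ) (s : Fin 4) :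
    MWDom pay16 G true m s ↔
      (∀ x : Fin 3, x ∈ G false → rowPay16 s x ≤ ∑ a : Fin 4, m a * rowPay16 a x) ∧
      (∃ x ∈ G false, rowPay16 s x < ∑ a : Fin 4, m a * rowPay16 a x) := by
  constructor
  · rintro ⟨h1, t, ht, h2⟩
    refine ⟨fun x hx => ?_, t false, (oppIn_true_iff G t).1 ht, ?_⟩
    · have := h1 (jt s x) ((oppIn_true_iff G _).2 hx)
      erw [upd_row, epay_row, jt_false] at this; exact this
    · erw [upd_row, epay_row] at h2; exact h2
  · rintro ⟨h1, x, hx, h2⟩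
    refine ⟨fun t ht => ?_, jt s x, (oppIn_true_iff G _).2 hx, ?_⟩
    · erw [upd_row, epay_row]; exact h1 _ ((oppIn_true_iff G t).1 ht)
    · erw [upd_row, epay_row]; exact h2

lemma MWDom_col_iff (G : ∀ b, Set (Str16 b)) (m : Fin 3 → ℝ) (s : Fin 3) :
    MWDom pay16 G false m s ↔
      (∀ a : Fin 4, a ∈ G true → colPay16 a s ≤ ∑ x : Fin 3, m x * colPay16 a x) ∧
      (∃ a ∈ G true, colPay16 a s < ∑ x : Fin 3, m x * colPay16 a x) := by
  constructor
  · rintro ⟨h1, t, ht, h2⟩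
    refine ⟨fun a ha => ?_, t true, (oppIn_false_iff G t).1 ht, ?_⟩
    · have := h1 (jt a s) ((oppIn_false_iff G _).2 ha)
      erw [upd_col, epay_col, jt_true] at this; exact this
    · erw [upd_col, epay_col] at h2; exact h2
  · rintro ⟨h1, a, ha, h2⟩
    refine ⟨fun t ht => ?_, jt a s, (oppIn_false_iff G _).2 ha, ?_⟩
    · erw [upd_col, epay_col]; exact h1 _ ((oppIn_false_iff G t).1 ht)
    · erw [upd_col, epay_col]; exact h2

lemma WDom_row_iff (G : ∀ b, Set (Str16 b)) (s' s : Fin 4) :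
    WDom pay16 G true s' s ↔
      (∀ x : Fin 3, x ∈ G false → rowPay16 s x ≤ rowPay16 s' x) ∧
      (∃ x ∈ G false, rowPay16 s x < rowPay16 s' x) := by
  constructor
  · rintro ⟨h1, t, ht, h2⟩
    refine ⟨fun x hx => ?_, t false, (oppIn_true_iff G t).1 ht, ?_⟩
    · have := h1 (jt s x) ((oppIn_true_iff G _).2 hx)
      erw [upd_row, upd_row, jt_false] at this; exact this
    · erw [upd_row, upd_row] at h2; exact h2
  · rintro ⟨h1, x, hx, h2⟩
    refine ⟨fun t ht => ?_, jt s x, (oppIn_true_iff G _).2 hx, ?_⟩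
    · erw [upd_row, upd_row]; exact h1 _ ((oppIn_true_iff G t).1 ht)
    · erw [upd_row, upd_row]; exact h2

lemma WDom_col_iff (G : ∀ b, Set (Str16 b)) (s' s : Fin 3) :
    WDom pay16 G false s' s ↔
      (∀ a : Fin 4, a ∈ G true → colPay16 a s ≤ colPay16 a s') ∧
      (∃ a ∈ G true, colPay16 a s < colPay16 a s') := by
  constructor
  · rintro ⟨h1, t, ht, h2⟩
    refine ⟨fun a ha => ?_, t true, (oppIn_false_iff G t).1 ht, ?_⟩
    · have := h1 (jt a s) ((oppIn_false_iff G _).2 ha)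
      erw [upd_col, upd_col, jt_true] at this; exact this
    · erw [upd_col, upd_col] at h2; exact h2
  · rintro ⟨h1, a, ha, h2⟩
    refine ⟨fun t ht => ?_, jt a s, (oppIn_false_iff G _).2 ha, ?_⟩
    · erw [upd_col, upd_col]; exact h1 _ ((oppIn_false_iff G t).1 ht)
    · erw [upd_col, upd_col]; exact h2

lemma sum4 (m : Fin 4 → ℝ) : ∑ a : Str16 true, m a = m 0 + m 1 + m 2 + m 3 :=
  Fin.sum_univ_four m

lemma sum3 (m : Fin 3 → ℝ) : ∑ x : Str16 false, m x = m 0 + m 1 + m 2 :=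
  Fin.sum_univ_three m

@[simp] lemma rp00 : rowPay16 0 0 = 2 := rfl
@[simp] lemma cp00 : colPay16 0 0 = 1 := rfl
@[simp] lemma rp01 : rowPay16 0 1 = 0 := rfl
@[simp] lemma cp01 : colPay16 0 1 = 1 := rfl
@[simp] lemma rp02 : rowPay16 0 2 = 1 := rfl
@[simp] lemma cp02 : colPay16 0 2 = 0 := rfl
@[simp] lemma rp10 : rowPay16 1 0 = 0 := rfl
@[simp] lemma cp10 : colPay16 1 0 = 1 := rfl
@[simp] lemma rp11 : rowPay16 1 1 = 2 := rfl
@[simp] lemma cp11 : colPay16 1 1 = 1 := rfl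
@[simp] lemma rp12 : rowPay16 1 2 = 1 := rfl
@[simp] lemma cp12 : colPay16 1 2 = 0 := rfl
@[simp] lemma rp20 : rowPay16 2 0 = 1 := rfl
@[simp] lemma cp20 : colPay16 2 0 = 1 := rfl
@[simp] lemma rp21 : rowPay16 2 1 = 1 := rfl
@[simp] lemma cp21 : colPay16 2 1 = 0 := rfl
@[simp] lemma rp22 : rowPay16 2 2 = 0 := rfl
@[simp] lemma cp22 : colPay16 2 2 = 0 := rfl
@[simp] lemma rp30 : rowPay16 3 0 = 1 := rfl
@[simp] lemma cp30 : colPay16 3 0 = 0 := rfl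
@[simp] lemma rp31 : rowPay16 3 1 = 0 := rfl
@[simp] lemma cp31 : colPay16 3 1 = 1 := rfl
@[simp] lemma rp32 : rowPay16 3 2 = 0 := rfl
@[simp] lemma cp32 : colPay16 3 2 = 0 := rfl

lemma A_mem_MLW (G : ∀ b, Set (Str16 b)) (hA : (0 : Fin 4) ∈ G true)
    (hX : (0 : Fin 3) ∈ G false) : (0 : Fin 4) ∈ MLW pay16 G true := by
  refine ⟨hA, ?_⟩
  rintro ⟨m, ⟨hpos, hsum, -⟩, hd⟩
  erw [MWDom_row_iff] at hd
  obtain ⟨h1, x, hx, h2⟩ := hd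
  rw [sum4 m] at hsum
  have k := h1 0 hX
  simp [Fin.sum_univ_four] at k
  have h1' := hpos (1 : Fin 4)
  have h2' := hpos (2 : Fin 4)
  have h3' := hpos (3 : Fin 4)
  have e1 : m (1 : Fin 4) = 0 := by linarith
  have e2 : m (2 : Fin 4) = 0 := by linarith
  have e3 : m (3 : Fin 4) = 0 := by linarith
  have e0 : m (0 : Fin 4) = 1 := by linarith
  rw [Fin.sum_univ_four, e0, e1, e2, e3] at h2
  simp at h2

lemma B_mem_MLW (G : ∀ b, Set (Str16 b)) (hB : (1 : Fin 4) ∈ G true)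
    (hY : (1 : Fin 3) ∈ G false) : (1 : Fin 4) ∈ MLW pay16 G true := by
  refine ⟨hB, ?_⟩
  rintro ⟨m, ⟨hpos, hsum, -⟩, hd⟩
  erw [MWDom_row_iff] at hd
  obtain ⟨h1, x, hx, h2⟩ := hd
  rw [sum4 m] at hsum
  have k := h1 1 hY
  simp [Fin.sum_univ_four] at k
  have h0' := hpos (0 : Fin 4)
  have h2' := hpos (2 : Fin 4)
  have h3' := hpos (3 : Fin 4)
  have e0 : m (0 : Fin 4) = 0 := by linarith
  have e2 : m (2 : Fin 4) = 0 := by linarith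
  have e3 : m (3 : Fin 4) = 0 := by linarith
  have e1 : m (1 : Fin 4) = 1 := by linarith
  rw [Fin.sum_univ_four, e0, e1, e2, e3] at h2
  simp at h2

lemma X_mem_MLW_top : (0 : Fin 3) ∈ MLW pay16 ⊤ false := by
  refine ⟨trivial, ?_⟩
  rintro ⟨m, ⟨hpos, hsum, -⟩, hd⟩
  erw [MWDom_col_iff] at hd
  obtain ⟨h1, a, ha, h2⟩ := hd
  rw [sum3 m] at hsum
  have k := h1 2 trivial
  simp [Fin.sum_univ_three] at k
  have h1' := hpos (1 : Fin 3)
  have h2' := hpos (2 : Fin 3)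
  have e1 : m (1 : Fin 3) = 0 := by linarith
  have e2 : m (2 : Fin 3) = 0 := by linarith
  have e0 : m (0 : Fin 3) = 1 := by linarith
  rw [Fin.sum_univ_three, e0, e1, e2] at h2
  simp at h2

lemma Y_mem_MLW_top : (1 : Fin 3) ∈ MLW pay16 ⊤ false := by
  refine ⟨trivial, ?_⟩
  rintro ⟨m, ⟨hpos, hsum, -⟩, hd⟩
  erw [MWDom_col_iff] at hd
  obtain ⟨h1, a, ha, h2⟩ := hd
  rw [sum3 m] at hsum
  have k := h1 3 trivial
  simp [Fin.sum_univ_three] at k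
  have h0' := hpos (0 : Fin 3)
  have h2' := hpos (2 : Fin 3)
  have e0 : m (0 : Fin 3) = 0 := by linarith
  have e2 : m (2 : Fin 3) = 0 := by linarith
  have e1 : m (1 : Fin 3) = 1 := by linarith
  rw [Fin.sum_univ_three, e0, e1, e2] at h2
  simp at h2

lemma col_mem_MLW_GM (s : Fin 3) (hs : s ∈ GM16 false) : s ∈ MLW pay16 GM16 false := by
  refine ⟨hs, ?_⟩
  rintro ⟨m, ⟨hpos, hsum, hsupp⟩, hd⟩
  erw [MWDom_col_iff] at hd
  obtain ⟨-, a, ha, h2⟩ := hd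
  have e2 : m (2 : Fin 3) = 0 := by
    by_contra h
    have h2' : (2 : Fin 3) ∈ ({0, 1} : Set (Fin 3)) := hsupp (2 : Fin 3) h
    simp at h2'
  rw [sum3 m] at hsum
  rw [Fin.sum_univ_three] at h2
  have hs' : s = (0 : Fin 3) ∨ s = (1 : Fin 3) := hs
  have ha' : a = (0 : Fin 4) ∨ a = (1 : Fin 4) := ha
  rcases hs' with rfl | rfl <;> rcases ha' with rfl | rfl <;>
    simp [e2] at h2 <;> linarith

lemma C_not_mem_MLW_top : (2 : Fin 4) ∉ MLW pay16 ⊤ true := by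
  rintro ⟨-, hnd⟩
  refine hnd ⟨![1/2, 1/2, 0, 0], ⟨?_, ?_, fun _ _ => trivial⟩, ?_⟩
  · intro a
    fin_cases a <;> norm_num
  · rw [sum4]; norm_num [Matrix.cons_val_two, Matrix.cons_val_three, Matrix.vecHead, Matrix.vecTail]
  · rw [MWDom_row_iff]
    refine ⟨fun x _ => ?_, (2 : Fin 3), trivial, ?_⟩
    · fin_cases x <;> simp [Fin.sum_univ_four] <;> norm_num
    · simp [Fin.sum_univ_four]

lemma D_not_mem_MLW_top : (3 : Fin 4) ∉ MLW pay16 ⊤ true := by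
  rintro ⟨-, hnd⟩
  refine hnd ⟨![1, 0, 0, 0], ⟨?_, ?_, fun _ _ => trivial⟩, ?_⟩
  · intro a
    fin_cases a <;> norm_num
  · rw [sum4]; norm_num [Matrix.cons_val_two, Matrix.cons_val_three, Matrix.vecHead, Matrix.vecTail]
  · rw [MWDom_row_iff]
    refine ⟨fun x _ => ?_, (0 : Fin 3), trivial, ?_⟩
    · fin_cases x <;> simp [Fin.sum_univ_four] <;> norm_num
    · simp [Fin.sum_univ_four]

lemma Z_not_mem_MLW_top : (2 : Fin 3) ∉ MLW pay16 ⊤ false := by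
  rintro ⟨-, hnd⟩
  refine hnd ⟨![1, 0, 0], ⟨?_, ?_, fun _ _ => trivial⟩, ?_⟩
  · intro x
    fin_cases x <;> norm_num
  · rw [sum3]; norm_num [Matrix.cons_val_two, Matrix.vecHead, Matrix.vecTail]
  · rw [MWDom_col_iff]
    refine ⟨fun a _ => ?_, (0 : Fin 4), trivial, ?_⟩
    · fin_cases a <;> simp [Fin.sum_univ_three] <;> norm_num
    · simp [Fin.sum_univ_three]

instance (b : Bool) : DecidableEq (Str16 b) := by
  cases b
  · exact inferInstanceAs (DecidableEq (Fin 3))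
  · exact inferInstanceAs (DecidableEq (Fin 4))

lemma notGM_Z : ((2 : Fin 3) : Str16 false) ∉ GM16 false := by
  intro h
  simp only [GM16, Set.mem_insert_iff, Set.mem_singleton_iff] at h
  rcases h with h | h <;> exact absurd h (by decide)
lemma notGM_C : ((2 : Fin 4) : Str16 true) ∉ GM16 true := by
  intro h
  simp only [GM16, Set.mem_insert_iff, Set.mem_singleton_iff] at h
  rcases h with h | h <;> exact absurd h (by decide)
lemma notGM_D : ((3 : Fin 4) : Str16 true) ∉ GM16 true := by
  intro h
  simp only [GM16, Set.mem_insert_iff, Set.mem_singleton_iff] at h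
  rcases h with h | h <;> exact absurd h (by decide)

lemma MLW_top : MLW pay16 ⊤ = GM16 := by
  funext b
  cases b
  · apply Set.ext; intro x
    fin_cases x
    · exact ⟨fun _ => Or.inl rfl, fun _ => X_mem_MLW_top⟩
    · exact ⟨fun _ => Or.inr rfl, fun _ => Y_mem_MLW_top⟩
    · exact ⟨fun h => absurd h Z_not_mem_MLW_top, fun h => absurd h notGM_Z⟩
  · apply Set.ext; intro a
    fin_cases a
    · exact ⟨fun _ => Or.inl rfl, fun _ => A_mem_MLW ⊤ trivial trivial⟩
    · exact ⟨fun _ => Or.inr rfl, fun _ => B_mem_MLW ⊤ trivial trivial⟩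
    · exact ⟨fun h => absurd h C_not_mem_MLW_top, fun h => absurd h notGM_C⟩
    · exact ⟨fun h => absurd h D_not_mem_MLW_top, fun h => absurd h notGM_D⟩

lemma MLW_GM : MLW pay16 GM16 = GM16 := by
  funext b
  cases b
  · apply Set.ext; intro x
    constructor
    · exact fun h => h.1
    · exact fun h => col_mem_MLW_GM x h
  · apply Set.ext; intro a
    constructor
    · exact fun h => h.1
    · intro h
      rcases (show a = (0 : Fin 4) ∨ a = (1 : Fin 4) from h) with rfl | rfl
      · exact A_mem_MLW GM16 h (Or.inl rfl)
      · exact B_mem_MLW GM16 h (Or.inr rfl)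

lemma A_mem_LW (G : ∀ b, Set (Str16 b)) (hA : (0 : Fin 4) ∈ G true)
    (hX : (0 : Fin 3) ∈ G false) : (0 : Fin 4) ∈ LW pay16 G true := by
  refine ⟨hA, ?_⟩
  rintro ⟨s', -, hd⟩
  erw [WDom_row_iff] at hd
  obtain ⟨h1, x, hx, h2⟩ := hd
  have k := h1 0 hX
  fin_cases s'
  · exact absurd h2 (lt_irrefl _)
  · norm_num [rowPay16, Matrix.vecHead, Matrix.vecTail] at k
  · norm_num [rowPay16, Matrix.vecHead, Matrix.vecTail] at k
  · norm_num [rowPay16, Matrix.vecHead, Matrix.vecTail] at k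

lemma B_mem_LW (G : ∀ b, Set (Str16 b)) (hB : (1 : Fin 4) ∈ G true)
    (hY : (1 : Fin 3) ∈ G false) : (1 : Fin 4) ∈ LW pay16 G true := by
  refine ⟨hB, ?_⟩
  rintro ⟨s', -, hd⟩
  erw [WDom_row_iff] at hd
  obtain ⟨h1, x, hx, h2⟩ := hd
  have k := h1 1 hY
  fin_cases s'
  · norm_num [rowPay16, Matrix.vecHead, Matrix.vecTail] at k
  · exact absurd h2 (lt_irrefl _)
  · norm_num [rowPay16, Matrix.vecHead, Matrix.vecTail] at k
  · norm_num [rowPay16, Matrix.vecHead, Matrix.vecTail] at k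

lemma C_mem_LW (G : ∀ b, Set (Str16 b)) (hC : (2 : Fin 4) ∈ G true)
    (hX : (0 : Fin 3) ∈ G false) (hY : (1 : Fin 3) ∈ G false) :
    (2 : Fin 4) ∈ LW pay16 G true := by
  refine ⟨hC, ?_⟩
  rintro ⟨s', -, hd⟩
  erw [WDom_row_iff] at hd
  obtain ⟨h1, x, hx, h2⟩ := hd
  have k0 := h1 0 hX
  have k1 := h1 1 hY
  fin_cases s'
  · norm_num [rowPay16, Matrix.cons_val_two, Matrix.cons_val_three, Matrix.vecHead, Matrix.vecTail] at k1
  · norm_num [rowPay16, Matrix.cons_val_two, Matrix.cons_val_three, Matrix.vecHead, Matrix.vecTail] at k0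
  · exact absurd h2 (lt_irrefl _)
  · norm_num [rowPay16, Matrix.cons_val_two, Matrix.cons_val_three, Matrix.vecHead, Matrix.vecTail] at k1

lemma X_mem_LW (G : ∀ b, Set (Str16 b)) (hX : (0 : Fin 3) ∈ G false)
    (hC : (2 : Fin 4) ∈ G true) : (0 : Fin 3) ∈ LW pay16 G false := by
  refine ⟨hX, ?_⟩
  rintro ⟨s', -, hd⟩
  erw [WDom_col_iff] at hd
  obtain ⟨h1, a, ha, h2⟩ := hd
  have k := h1 2 hC
  fin_cases s'
  · exact absurd h2 (lt_irrefl _)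
  · norm_num [colPay16, Matrix.cons_val_two, Matrix.cons_val_three, Matrix.vecHead, Matrix.vecTail] at k
  · norm_num [colPay16, Matrix.cons_val_two, Matrix.cons_val_three, Matrix.vecHead, Matrix.vecTail] at k

lemma Y_mem_LW_top : (1 : Fin 3) ∈ LW pay16 ⊤ false := by
  refine ⟨trivial, ?_⟩
  rintro ⟨s', -, hd⟩
  erw [WDom_col_iff] at hd
  obtain ⟨h1, a, ha, h2⟩ := hd
  have k := h1 3 trivial
  fin_cases s'
  · norm_num [colPay16, Matrix.cons_val_two, Matrix.cons_val_three, Matrix.vecHead, Matrix.vecTail] at k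
  · exact absurd h2 (lt_irrefl _)
  · norm_num [colPay16, Matrix.cons_val_two, Matrix.cons_val_three, Matrix.vecHead, Matrix.vecTail] at k

lemma X_mem_LW_single (G : ∀ b, Set (Str16 b)) (hX : (0 : Fin 3) ∈ G false)
    (hsub : ∀ x : Str16 false, x ∈ G false → x = (0 : Fin 3)) :
    (0 : Fin 3) ∈ LW pay16 G false := by
  refine ⟨hX, ?_⟩
  rintro ⟨s', hs', hd⟩
  erw [WDom_col_iff] at hd
  obtain ⟨-, a, -, h2⟩ := hd
  rw [hsub s' hs'] at h2
  exact absurd h2 (lt_irrefl _)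

lemma A_mem_LW_single (G : ∀ b, Set (Str16 b)) (hA : (0 : Fin 4) ∈ G true)
    (hsub : ∀ a : Str16 true, a ∈ G true → a = (0 : Fin 4)) :
    (0 : Fin 4) ∈ LW pay16 G true := by
  refine ⟨hA, ?_⟩
  rintro ⟨s', hs', hd⟩
  erw [WDom_row_iff] at hd
  obtain ⟨-, x, -, h2⟩ := hd
  rw [hsub s' hs'] at h2
  exact absurd h2 (lt_irrefl _)

/-! The intermediate restrictions for LW iteration. -/

def Gone : ∀ b, Set (Str16 b)
  | true => ({0, 1, 2} : Set (Fin 4))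
  | false => ({0, 1} : Set (Fin 3))

def Gtwo : ∀ b, Set (Str16 b)
  | true => ({0, 1, 2} : Set (Fin 4))
  | false => ({0} : Set (Fin 3))

lemma notGone_D : ((3 : Fin 4) : Str16 true) ∉ Gone true := by
  intro h
  simp only [Gone, Set.mem_insert_iff, Set.mem_singleton_iff] at h
  rcases h with h | h | h <;> exact absurd h (by decide)

lemma notGone_Z : ((2 : Fin 3) : Str16 false) ∉ Gone false := by
  intro h
  simp only [Gone, Set.mem_insert_iff, Set.mem_singleton_iff] at h
  rcases h with h | h <;> exact absurd h (by decide)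

lemma notGtwo_Y : ((1 : Fin 3) : Str16 false) ∉ Gtwo false := by
  intro h
  simp only [Gtwo, Set.mem_singleton_iff] at h
  exact absurd h (by decide : ¬ (1 : Fin 3) = 0)

lemma notGtwo_Z : ((2 : Fin 3) : Str16 false) ∉ Gtwo false := by
  intro h
  simp only [Gtwo, Set.mem_singleton_iff] at h
  exact absurd h (by decide : ¬ (2 : Fin 3) = 0)

lemma notGL_B : ((1 : Fin 4) : Str16 true) ∉ GL16 true := by
  intro h
  simp only [GL16, Set.mem_singleton_iff] at h
  exact absurd h (by decide : ¬ (1 : Fin 4) = 0)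

lemma notGL_C : ((2 : Fin 4) : Str16 true) ∉ GL16 true := by
  intro h
  simp only [GL16, Set.mem_singleton_iff] at h
  exact absurd h (by decide : ¬ (2 : Fin 4) = 0)

lemma notGL_D : ((3 : Fin 4) : Str16 true) ∉ GL16 true := by
  intro h
  simp only [GL16, Set.mem_singleton_iff] at h
  exact absurd h (by decide : ¬ (3 : Fin 4) = 0)

lemma D_not_mem_LW_top : (3 : Fin 4) ∉ LW pay16 ⊤ true := by
  rintro ⟨-, hnd⟩
  refine hnd ⟨(0 : Fin 4), trivial, (WDom_row_iff _ _ _).2 ⟨fun x _ => ?_, (0 : Fin 3), trivial, by norm_num⟩⟩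
  fin_cases x <;> norm_num [rowPay16, Matrix.cons_val_two, Matrix.cons_val_three, Matrix.vecHead, Matrix.vecTail]

lemma Z_not_mem_LW_top : (2 : Fin 3) ∉ LW pay16 ⊤ false := by
  rintro ⟨-, hnd⟩
  refine hnd ⟨(0 : Fin 3), trivial, (WDom_col_iff _ _ _).2 ⟨fun a _ => ?_, (0 : Fin 4), trivial, by norm_num⟩⟩
  fin_cases a <;> norm_num [colPay16, Matrix.cons_val_two, Matrix.cons_val_three, Matrix.vecHead, Matrix.vecTail, Matrix.cons_val_succ']

lemma Y_not_mem_LW_Gone : (1 : Fin 3) ∉ LW pay16 Gone false := by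
  rintro ⟨-, hnd⟩
  refine hnd ⟨(0 : Fin 3), Or.inl rfl, (WDom_col_iff _ _ _).2
    ⟨fun a ha => ?_, (2 : Fin 4), Or.inr (Or.inr rfl), by norm_num⟩⟩
  rcases (show a = (0 : Fin 4) ∨ a = (1 : Fin 4) ∨ a = (2 : Fin 4) by
    exact ha) with rfl | rfl | rfl <;> norm_num

lemma B_not_mem_LW_Gtwo : (1 : Fin 4) ∉ LW pay16 Gtwo true := by
  rintro ⟨-, hnd⟩
  refine hnd ⟨(0 : Fin 4), Or.inl rfl, (WDom_row_iff _ _ _).2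
    ⟨fun x hx => ?_, (0 : Fin 3), rfl, by norm_num⟩⟩
  rw [show x = (0 : Fin 3) from hx]
  norm_num

lemma C_not_mem_LW_Gtwo : (2 : Fin 4) ∉ LW pay16 Gtwo true := by
  rintro ⟨-, hnd⟩
  refine hnd ⟨(0 : Fin 4), Or.inl rfl, (WDom_row_iff _ _ _).2
    ⟨fun x hx => ?_, (0 : Fin 3), rfl, by norm_num⟩⟩
  rw [show x = (0 : Fin 3) from hx]
  norm_num

lemma LW_top : LW pay16 ⊤ = Gone := by
  funext b
  cases b
  · apply Set.ext; intro x
    fin_cases x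
    · exact ⟨fun _ => Or.inl rfl, fun _ => X_mem_LW ⊤ trivial trivial⟩
    · exact ⟨fun _ => Or.inr rfl, fun _ => Y_mem_LW_top⟩
    · exact ⟨fun h => absurd h Z_not_mem_LW_top, fun h => absurd h notGone_Z⟩
  · apply Set.ext; intro a
    fin_cases a
    · exact ⟨fun _ => Or.inl rfl, fun _ => A_mem_LW ⊤ trivial trivial⟩
    · exact ⟨fun _ => Or.inr (Or.inl rfl), fun _ => B_mem_LW ⊤ trivial trivial⟩
    · exact ⟨fun _ => Or.inr (Or.inr rfl), fun _ => C_mem_LW ⊤ trivial trivial trivial⟩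
    · exact ⟨fun h => absurd h D_not_mem_LW_top, fun h => absurd h notGone_D⟩

lemma LW_Gone : LW pay16 Gone = Gtwo := by
  funext b
  cases b
  · apply Set.ext; intro x
    fin_cases x
    · exact ⟨fun _ => rfl, fun _ => X_mem_LW Gone (Or.inl rfl) (Or.inr (Or.inr rfl))⟩
    · exact ⟨fun h => absurd h Y_not_mem_LW_Gone, fun h => absurd h notGtwo_Y⟩
    · exact ⟨fun h => absurd h.1 notGone_Z, fun h => absurd h notGtwo_Z⟩
  · apply Set.ext; intro a
    fin_cases a
    · exact ⟨fun _ => Or.inl rfl, fun _ => A_mem_LW Gone (Or.inl rfl) (Or.inl rfl)⟩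
    · exact ⟨fun _ => Or.inr (Or.inl rfl),
        fun _ => B_mem_LW Gone (Or.inr (Or.inl rfl)) (Or.inr rfl)⟩
    · exact ⟨fun _ => Or.inr (Or.inr rfl),
        fun _ => C_mem_LW Gone (Or.inr (Or.inr rfl)) (Or.inl rfl) (Or.inr rfl)⟩
    · exact ⟨fun h => absurd h.1 notGone_D, fun h => absurd h notGone_D⟩

lemma Gtwo_col_single : ∀ x : Str16 false, x ∈ Gtwo false → x = (0 : Fin 3) := by
  intro x hx
  exact hx

lemma GL_col_single : ∀ x : Str16 false, x ∈ GL16 false → x = (0 : Fin 3) := by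
  intro x hx
  exact hx

lemma GL_row_single : ∀ a : Str16 true, a ∈ GL16 true → a = (0 : Fin 4) := by
  intro a ha
  exact ha

lemma notGL_Y : ((1 : Fin 3) : Str16 false) ∉ GL16 false := by
  intro h
  simp only [GL16, Set.mem_singleton_iff] at h
  exact absurd h (by decide : ¬ (1 : Fin 3) = 0)

lemma notGL_Z : ((2 : Fin 3) : Str16 false) ∉ GL16 false := by
  intro h
  simp only [GL16, Set.mem_singleton_iff] at h
  exact absurd h (by decide : ¬ (2 : Fin 3) = 0)

lemma LW_Gtwo : LW pay16 Gtwo = GL16 := by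
  funext b
  cases b
  · apply Set.ext; intro x
    fin_cases x
    · exact ⟨fun _ => rfl, fun _ => X_mem_LW_single Gtwo rfl Gtwo_col_single⟩
    · exact ⟨fun h => absurd h.1 notGtwo_Y, fun h => absurd h notGL_Y⟩
    · exact ⟨fun h => absurd h.1 notGtwo_Z, fun h => absurd h notGL_Z⟩
  · apply Set.ext; intro a
    fin_cases a
    · exact ⟨fun _ => rfl, fun _ => A_mem_LW Gtwo (Or.inl rfl) rfl⟩
    · exact ⟨fun h => absurd h B_not_mem_LW_Gtwo, fun h => absurd h notGL_B⟩
    · exact ⟨fun h => absurd h C_not_mem_LW_Gtwo, fun h => absurd h notGL_C⟩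
    · exact ⟨fun h => absurd h.1 notGone_D, fun h => absurd h notGL_D⟩

lemma LW_GL : LW pay16 GL16 = GL16 := by
  funext b
  cases b
  · apply Set.ext; intro x
    constructor
    · exact fun h => h.1
    · intro hx
      rw [GL_col_single x hx]
      exact X_mem_LW_single GL16 rfl GL_col_single
  · apply Set.ext; intro a
    constructor
    · exact fun h => h.1
    · intro ha
      rw [GL_row_single a ha]
      exact A_mem_LW_single GL16 rfl GL_row_single

theorem MLW_omega_not_subset_LW_omega :
    (⨅ k : ℕ, (MLW pay16)^[k] ⊤) = GM16 ∧
    (⨅ k : ℕ, (LW pay16)^[k] ⊤) = GL16 ∧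
    ¬ (⨅ k : ℕ, (MLW pay16)^[k] ⊤) ≤ ⨅ k : ℕ, (LW pay16)^[k] ⊤ := by
  have hM1 : ∀ k : ℕ, (MLW pay16)^[k + 1] ⊤ = GM16 := by
    intro k
    induction k with
    | zero => simpa using MLW_top
    | succ n ih => rw [Function.iterate_succ_apply', ih, MLW_GM]
  have hL3 : ∀ k : ℕ, (LW pay16)^[k + 3] ⊤ = GL16 := by
    intro k
    induction k with
    | zero =>
      show (LW pay16)^[2 + 1] ⊤ = GL16
      rw [Function.iterate_succ_apply', show (2 : ℕ) = 1 + 1 from rfl,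
        Function.iterate_succ_apply', Function.iterate_one, LW_top, LW_Gone, LW_Gtwo]
    | succ n ih =>
      show (LW pay16)^[(n + 3) + 1] ⊤ = GL16
      rw [Function.iterate_succ_apply', ih, LW_GL]
  have hMeq : (⨅ k : ℕ, (MLW pay16)^[k] ⊤) = GM16 := by
    apply le_antisymm
    · have h := iInf_le (fun k : ℕ => (MLW pay16)^[k] ⊤) 1
      rwa [show (MLW pay16)^[1] ⊤ = GM16 from hM1 0] at h
    · apply le_iInf
      intro k
      cases k with
      | zero => exact le_top
      | succ n => rw [hM1 n]
  have hLeq : (⨅ k : ℕ, (LW pay16)^[k] ⊤) = GL16 := by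
    apply le_antisymm
    · have h := iInf_le (fun k : ℕ => (LW pay16)^[k] ⊤) 3
      rwa [show (LW pay16)^[3] ⊤ = GL16 from hL3 0] at h
    · apply le_iInf
      intro k
      match k with
      | 0 => exact le_top
      | 1 =>
        rw [show (LW pay16)^[1] ⊤ = Gone from by simpa using LW_top]
        intro b
        cases b
        · intro x hx; rw [GL_col_single x hx]; exact Or.inl rfl
        · intro a ha; rw [GL_row_single a ha]; exact Or.inl rfl
      | 2 =>
        rw [show (LW pay16)^[2] ⊤ = Gtwo from by
          rw [show (2 : ℕ) = 1 + 1 from rfl, Function.iterate_succ_apply',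
            Function.iterate_one, LW_top, LW_Gone]]
        intro b
        cases b
        · intro x hx; rw [GL_col_single x hx]; exact rfl
        · intro a ha; rw [GL_row_single a ha]; exact Or.inl rfl
      | (n + 3) => rw [hL3 n]
  refine ⟨hMeq, hLeq, ?_⟩
  rw [hMeq, hLeq]
  intro h
  exact notGL_B (h true (Or.inr rfl))
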